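/- Let (V, τ) be an unshifted Poisson complex over ℝ and ρ a degree-1 element of hom(Λ²V, ℝ). Define D to be the acyclic two-term complex ℂ ←^{id} ℂ in degrees -1 and 0, with generators x in degree 0 and y = dx in degree -1. Let H = V_ℂ ⊕ D ⊕ ℂ with bracket [v₁⊕α₁⊕c₁, v₂⊕α₂⊕c₂] = 0 ⊕ (i ∂ρ(v₁,v₂) x + i ρ(v₁,v₂) y) ⊕ i τ(v₁,v₂). For each real s, the quotient π_s of H by the dg Lie ideal generated by the relations x = s·1 and y = 0 is isomorphic to the Heisenberg Lie algebra Heis(V, τ + s ∂ρ), and the quotient chain map π_s = id_V ⊕ q_s, where q_s : D ⊕ ℂ → ℂ sends (c₁x + c₂y) ⊕ c₃ to s c₁ + c₃, is a quasi-isomorphism. -/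

import Mathlib

open CategoryTheory

noncomputable section

/-- The components of the two-term complex `D = (ℂ ←^{id} ℂ)` concentrated in degrees
`0` and `-1`: each component is `ℂ` in degrees `0, -1` and `0` elsewhere. -/
def DX (n : ℤ) : Type := PLift (n = 0 ∨ n = -1) → ℂ

instance (n : ℤ) : AddCommGroup (DX n) :=
  inferInstanceAs (AddCommGroup (PLift (n = 0 ∨ n = -1) → ℂ))

instance (n : ℤ) : Module ℂ (DX n) :=
  inferInstanceAs (Module ℂ (PLift (n = 0 ∨ n = -1) → ℂ))

/-- The differential of `D`: the identity `ℂ → ℂ` from degree `0` to degree `-1`. -/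
def dD (i j : ℤ) : DX i →ₗ[ℂ] DX j :=
  if h : i = 0 ∧ j = -1 then
    LinearMap.funLeft ℂ ℂ (fun _ : PLift (j = 0 ∨ j = -1) => (⟨Or.inl h.1⟩ : PLift (i = 0 ∨ i = -1)))
  else 0

/-- The acyclic two-term chain complex `D = (ℂ ←^{id} ℂ)` in degrees `0` and `-1`. -/
def Dcx : ChainComplex (ModuleCat ℂ) ℤ where
  X n := ModuleCat.of ℂ (DX n)
  d i j := ModuleCat.ofHom (dD i j)
  shape i j h := by
    have hc : ¬(i = 0 ∧ j = -1) := by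
      intro hc
      exact h (by simp only [ComplexShape.down_Rel]; omega)
    apply ModuleCat.hom_ext
    exact dif_neg hc
  d_comp_d' i j k _ _ := by
    apply ModuleCat.hom_ext
    show (dD j k).comp (dD i j) = 0
    by_cases h1 : j = 0 ∧ k = -1
    · have h2 : ¬(i = 0 ∧ j = -1) := by omega
      have hz : dD i j = 0 := dif_neg h2
      rw [hz, LinearMap.comp_zero]
    · have hz : dD j k = 0 := dif_neg h1
      rw [hz, LinearMap.zero_comp]

/-- The direct sum of two chain complexes of `ℂ`-vector spaces. -/
def prodCx (A B : ChainComplex (ModuleCat ℂ) ℤ) : ChainComplex (ModuleCat ℂ) ℤ where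
  X n := ModuleCat.of ℂ (A.X n × B.X n)
  d i j := ModuleCat.ofHom ((A.d i j).hom.prodMap (B.d i j).hom)
  shape i j h := by
    apply ModuleCat.hom_ext
    show (A.d i j).hom.prodMap (B.d i j).hom = 0
    rw [A.shape i j h, B.shape i j h]
    apply LinearMap.ext
    intro x
    simp
  d_comp_d' i j k _ _ := by
    apply ModuleCat.hom_ext
    apply LinearMap.ext
    intro x
    have hA := LinearMap.congr_fun (congrArg ModuleCat.Hom.hom (A.d_comp_d i j k)) x.1
    have hB := LinearMap.congr_fun (congrArg ModuleCat.Hom.hom (B.d_comp_d i j k)) x.2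
    simp only [ModuleCat.hom_comp, ModuleCat.hom_zero, LinearMap.coe_comp, Function.comp_apply,
      LinearMap.zero_apply] at hA hB
    show ((A.d j k).hom.prodMap (B.d j k).hom) (((A.d i j).hom.prodMap (B.d i j).hom) x) = 0
    simp only [LinearMap.prodMap_apply]
    exact Prod.ext hA hB

open TensorProduct

/-- A degree `n` element of the mapping complex `hom(V ⊗ V, ℝ)` (with `ℝ` concentrated in
degree `0`): a family of bilinear pairings `V_a ⊗ V_b → ℝ` for `a + b = -n`. -/
def Pairing (V : ChainComplex (ModuleCat ℝ) ℤ) (n : ℤ) : Type :=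
  ∀ a : ℤ, V.X a →ₗ[ℝ] V.X (-n - a) →ₗ[ℝ] ℝ

instance (V : ChainComplex (ModuleCat ℝ) ℤ) (n : ℤ) : AddCommGroup (Pairing V n) :=
  inferInstanceAs (AddCommGroup (∀ a : ℤ, V.X a →ₗ[ℝ] V.X (-n - a) →ₗ[ℝ] ℝ))

instance (V : ChainComplex (ModuleCat ℝ) ℤ) (n : ℤ) : Module ℝ (Pairing V n) :=
  inferInstanceAs (Module ℝ (∀ a : ℤ, V.X a →ₗ[ℝ] V.X (-n - a) →ₗ[ℝ] ℝ))

/-- The differential of the mapping complex `hom(V ⊗ V, ℝ)`. -/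
def dPair (V : ChainComplex (ModuleCat ℝ) ℤ) (n m : ℤ) (hm : m = n - 1)
    (ρ : Pairing V n) : Pairing V m :=
  fun a =>
    ((ρ (a - 1)).comp (V.d a (a - 1)).hom).compl₂
        (eqToHom (congrArg V.X (by omega : -m - a = -n - (a - 1)))).hom
      + (a.negOnePow : ℤ) • ((ρ a).compl₂ (V.d (-m - a) (-n - a)).hom)

/-- Graded antisymmetry `τ ∘ γ = - τ` of a pairing. -/
def IsAntisym (V : ChainComplex (ModuleCat ℝ) ℤ) (n : ℤ) (τ : Pairing V n) : Prop :=
  ∀ (a : ℤ) (v : V.X a) (w : V.X (-n - a)),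
    ((a * (-n - a)).negOnePow : ℤ) •
        τ (-n - a) w (eqToHom (congrArg V.X (by omega : a = -n - (-n - a))) v)
      = - τ a v w

/-- The components of the complex with `ℂ` concentrated in degree `0`. -/
abbrev CXc (n : ℤ) : Type := PLift (n = 0) → ℂ

/-- The underlying chain complex `V_ℂ ⊕ D ⊕ ℂ` of the dg Lie algebra `H` of
Proposition A.3 (`x` and `y = dx` span `D`, the unit `1` spans the last summand `ℂ`,
concentrated in degree `0`). -/
def Hcx (V : ChainComplex (ModuleCat ℝ) ℤ) : ChainComplex (ModuleCat ℂ) ℤ where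
  X n := ModuleCat.of ℂ ((ℂ ⊗[ℝ] V.X n) × (DX n × CXc n))
  d i j := ModuleCat.ofHom ((LinearMap.baseChange ℂ (V.d i j).hom).prodMap ((dD i j).prodMap 0))
  shape i j h := by
    apply ModuleCat.hom_ext
    show (LinearMap.baseChange ℂ (V.d i j).hom).prodMap ((dD i j).prodMap 0) = 0
    have hc : ¬(i = 0 ∧ j = -1) := by
      intro hc
      exact h (by simp only [ComplexShape.down_Rel]; omega)
    rw [V.shape i j h, show dD i j = 0 from dif_neg hc, ModuleCat.hom_zero]
    apply LinearMap.ext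
    intro x
    simp
  d_comp_d' i j k _ _ := by
    apply ModuleCat.hom_ext
    have h1 : (LinearMap.baseChange ℂ (V.d j k).hom).comp (LinearMap.baseChange ℂ (V.d i j).hom) = 0 := by
      rw [← LinearMap.baseChange_comp]
      have hd : (V.d j k).hom.comp (V.d i j).hom = 0 := by
        rw [← ModuleCat.hom_comp, V.d_comp_d i j k, ModuleCat.hom_zero]
      rw [hd]
      apply LinearMap.ext
      intro x
      simp
    have h2 : (dD j k).comp (dD i j) = 0 := by
      by_cases hjk : j = 0 ∧ k = -1
      · have h2' : ¬(i = 0 ∧ j = -1) := by omega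
        rw [show dD i j = 0 from dif_neg h2']
        simp
      · rw [show dD j k = 0 from dif_neg hjk]
        simp
    apply LinearMap.ext
    intro x
    show ((LinearMap.baseChange ℂ (V.d j k).hom).prodMap ((dD j k).prodMap 0))
        (((LinearMap.baseChange ℂ (V.d i j).hom).prodMap ((dD i j).prodMap 0)) x) = 0
    simp only [LinearMap.prodMap_apply]
    refine Prod.ext ?_ (Prod.ext ?_ ?_)
    · exact LinearMap.congr_fun h1 x.1
    · exact LinearMap.congr_fun h2 x.2.1
    · simp

/-- The underlying chain complex `V_ℂ ⊕ ℂ` of the Heisenberg dg Lie algebra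
`Heis(V, τ + s ∂ρ)`. -/
def Heiscx (V : ChainComplex (ModuleCat ℝ) ℤ) : ChainComplex (ModuleCat ℂ) ℤ where
  X n := ModuleCat.of ℂ ((ℂ ⊗[ℝ] V.X n) × CXc n)
  d i j := ModuleCat.ofHom ((LinearMap.baseChange ℂ (V.d i j).hom).prodMap 0)
  shape i j h := by
    apply ModuleCat.hom_ext
    show (LinearMap.baseChange ℂ (V.d i j).hom).prodMap 0 = 0
    rw [V.shape i j h, ModuleCat.hom_zero]
    apply LinearMap.ext
    intro x
    simp
  d_comp_d' i j k _ _ := by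
    apply ModuleCat.hom_ext
    have h1 : (LinearMap.baseChange ℂ (V.d j k).hom).comp (LinearMap.baseChange ℂ (V.d i j).hom) = 0 := by
      rw [← LinearMap.baseChange_comp]
      have hd : (V.d j k).hom.comp (V.d i j).hom = 0 := by
        rw [← ModuleCat.hom_comp, V.d_comp_d i j k, ModuleCat.hom_zero]
      rw [hd]
      apply LinearMap.ext
      intro x
      simp
    apply LinearMap.ext
    intro x
    show ((LinearMap.baseChange ℂ (V.d j k).hom).prodMap 0)
        (((LinearMap.baseChange ℂ (V.d i j).hom).prodMap 0) x) = 0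
    simp only [LinearMap.prodMap_apply]
    refine Prod.ext ?_ ?_
    · exact LinearMap.congr_fun h1 x.1
    · simp

/-- The degree `n` component of `q_s : D ⊕ ℂ → ℂ`, `(c₁ x + c₂ y) ⊕ c₃ ↦ s c₁ + c₃`. -/
def qs (s : ℝ) (n : ℤ) : (DX n × CXc n) →ₗ[ℂ] CXc n :=
  ((s : ℂ) • ((LinearMap.funLeft ℂ ℂ
      (fun h : PLift (n = 0) => (⟨Or.inl h.down⟩ : PLift (n = 0 ∨ n = -1)))).comp
        (LinearMap.fst ℂ (DX n) (CXc n))) : (DX n × CXc n) →ₗ[ℂ] CXc n)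
    + LinearMap.snd ℂ (DX n) (CXc n)

/-- The quotient chain map `π_s = id ⊕ q_s : V_ℂ ⊕ D ⊕ ℂ → V_ℂ ⊕ ℂ`. -/
def πs (V : ChainComplex (ModuleCat ℝ) ℤ) (s : ℝ) : Hcx V ⟶ Heiscx V where
  f n := ModuleCat.ofHom (LinearMap.prodMap LinearMap.id (qs s n))
  comm' i j _ := by
    apply ModuleCat.hom_ext
    apply LinearMap.ext
    intro x
    show ((LinearMap.baseChange ℂ (V.d i j).hom).prodMap 0)
        ((LinearMap.prodMap LinearMap.id (qs s i)) x)
      = (LinearMap.prodMap LinearMap.id (qs s j))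
          (((LinearMap.baseChange ℂ (V.d i j).hom).prodMap ((dD i j).prodMap 0)) x)
    simp only [LinearMap.prodMap_apply, LinearMap.id_apply]
    refine Prod.ext rfl ?_
    funext h
    have hne : ¬(i = 0 ∧ j = -1) := by
      have := h.down
      omega
    rw [show dD i j = 0 from dif_neg hne]
    obtain ⟨x1, x2, x3⟩ := x
    simp [qs, dD, dif_neg hne]

/-- The inclusion `V_ℂ ⊕ ℂ → V_ℂ ⊕ D ⊕ ℂ`, a homotopy inverse to `π_s`. -/
def ιs (V : ChainComplex (ModuleCat ℝ) ℤ) : Heiscx V ⟶ Hcx V where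
  f n := ModuleCat.ofHom (LinearMap.prodMap LinearMap.id
    (LinearMap.prod 0 (LinearMap.id : CXc n →ₗ[ℂ] CXc n)))
  comm' i j _ := by
    apply ModuleCat.hom_ext
    apply LinearMap.ext
    intro x
    show ((LinearMap.baseChange ℂ (V.d i j).hom).prodMap ((dD i j).prodMap 0))
        ((LinearMap.prodMap LinearMap.id (LinearMap.prod 0 LinearMap.id)) x)
      = (LinearMap.prodMap LinearMap.id (LinearMap.prod 0 LinearMap.id))
          (((LinearMap.baseChange ℂ (V.d i j).hom).prodMap 0) x)
    change (ℂ ⊗[ℝ] V.X i) × CXc i at x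
    obtain ⟨x1, x3⟩ := x
    simp [LinearMap.prodMap_apply]

/-- Evaluation of an element of `DX i` on the generator `y` (nonzero only for `i = -1`). -/
def evy (i : ℤ) : DX i →ₗ[ℂ] ℂ :=
  if hi : i = -1 then LinearMap.proj (⟨Or.inr hi⟩ : PLift (i = 0 ∨ i = -1)) else 0

/-- The constant map `ℂ → DX j`. -/
def constD (j : ℤ) : ℂ →ₗ[ℂ] DX j := LinearMap.pi fun _ => LinearMap.id

/-- The constant map `ℂ → CXc j`. -/
def constC (j : ℤ) : ℂ →ₗ[ℂ] CXc j := LinearMap.pi fun _ => LinearMap.id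

/-- The components of the homotopy witnessing `π_s ≫ ι ≃ id`: in the only nonzero
degree it sends `y ↦ -x + s·1`. -/
def hmap (V : ChainComplex (ModuleCat ℝ) ℤ) (s : ℝ) (i j : ℤ) :
    (Hcx V).X i ⟶ (Hcx V).X j :=
  if j = 0 then
    ModuleCat.ofHom (LinearMap.prod 0
      ((((-1 : ℂ) • constD j).prod ((s : ℂ) • constC j)).comp
        ((evy i).comp ((LinearMap.fst ℂ (DX i) (CXc i)).comp
          (LinearMap.snd ℂ (ℂ ⊗[ℝ] V.X i) (DX i × CXc i)))))
      : ((ℂ ⊗[ℝ] V.X i) × (DX i × CXc i)) →ₗ[ℂ] ((ℂ ⊗[ℝ] V.X j) × (DX j × CXc j)))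
  else 0

lemma hmap_zero (V : ChainComplex (ModuleCat ℝ) ℤ) (s : ℝ) (i : ℤ) :
    hmap V s i 0 = ModuleCat.ofHom (LinearMap.prod 0
      ((((-1 : ℂ) • constD 0).prod ((s : ℂ) • constC 0)).comp
        ((evy i).comp ((LinearMap.fst ℂ (DX i) (CXc i)).comp
          (LinearMap.snd ℂ (ℂ ⊗[ℝ] V.X i) (DX i × CXc i)))))
      : ((ℂ ⊗[ℝ] V.X i) × (DX i × CXc i)) →ₗ[ℂ] ((ℂ ⊗[ℝ] V.X 0) × (DX 0 × CXc 0))) :=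
  if_pos rfl

lemma hmap_ne (V : ChainComplex (ModuleCat ℝ) ℤ) (s : ℝ) (i j : ℤ) (hj : j ≠ 0) :
    hmap V s i j = 0 :=
  if_neg hj

lemma evy_ne (i : ℤ) (hi : i ≠ -1) : evy i = 0 := dif_neg hi

lemma evy_neg1 : evy (-1) = (LinearMap.proj (⟨Or.inr rfl⟩ : PLift ((-1 : ℤ) = 0 ∨ (-1 : ℤ) = -1))
    : DX (-1) →ₗ[ℂ] ℂ) := dif_pos rfl

lemma dD_0 : dD 0 (-1) = (LinearMap.funLeft ℂ ℂ (fun _ : PLift ((-1 : ℤ) = 0 ∨ (-1 : ℤ) = -1) =>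
    (⟨Or.inl rfl⟩ : PLift ((0 : ℤ) = 0 ∨ (0 : ℤ) = -1))) : DX 0 →ₗ[ℂ] DX (-1)) :=
  dif_pos ⟨rfl, rfl⟩

lemma plift_eq {p : Prop} (a b : PLift p) : a = b := by
  cases a; cases b; rfl

/-- The homotopy `π_s ≫ ι ≃ id` on `H`. -/
def homoPiIota (V : ChainComplex (ModuleCat ℝ) ℤ) (s : ℝ) :
    Homotopy (πs V s ≫ ιs V) (𝟙 (Hcx V)) where
  hom i j := hmap V s i j
  zero i j hrel := by
    by_cases hj : j = 0
    · subst hj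
      have hi : i ≠ -1 := by
        intro h
        exact hrel (by simp [ComplexShape.down_Rel]; omega)
      show hmap V s i 0 = 0
      rw [hmap_zero, evy_ne i hi]
      apply ModuleCat.hom_ext
      apply LinearMap.ext
      intro x
      show (LinearMap.prod 0
        ((((-1 : ℂ) • constD 0).prod ((s : ℂ) • constC 0)).comp
          ((0 : DX i →ₗ[ℂ] ℂ).comp ((LinearMap.fst ℂ (DX i) (CXc i)).comp
            (LinearMap.snd ℂ (ℂ ⊗[ℝ] V.X i) (DX i × CXc i)))))) x
        = (0 : ((ℂ ⊗[ℝ] V.X i) × (DX i × CXc i)) →ₗ[ℂ]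
            ((ℂ ⊗[ℝ] V.X 0) × (DX 0 × CXc 0))) x
      simp
    · exact if_neg hj
  comm i := by
    by_cases hi0 : i = 0
    · subst hi0
      rw [dNext_eq _ (show (ComplexShape.down ℤ).Rel 0 (-1) by simp),
        prevD_eq _ (show (ComplexShape.down ℤ).Rel 1 0 by simp)]
      rw [hmap_ne V s 0 1 one_ne_zero, Limits.zero_comp, hmap_zero V s (-1)]
      apply ModuleCat.hom_ext
      apply LinearMap.ext
      rintro ⟨v, α, c⟩
      show ((v, ((0 : DX 0), qs s 0 (α, c))) : (ℂ ⊗[ℝ] V.X 0) × (DX 0 × CXc 0))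
          = (LinearMap.prod 0
              ((((-1 : ℂ) • constD 0).prod ((s : ℂ) • constC 0)).comp
                ((evy (-1)).comp ((LinearMap.fst ℂ (DX (-1)) (CXc (-1))).comp
                  (LinearMap.snd ℂ (ℂ ⊗[ℝ] V.X (-1)) (DX (-1) × CXc (-1)))))))
              (((Hcx V).d 0 (-1)).hom (v, α, c))
            + (0 : (ℂ ⊗[ℝ] V.X 0) × (DX 0 × CXc 0)) + (v, (α, c))
      have hd : ((Hcx V).d 0 (-1)).hom (v, α, c)
          = ((LinearMap.baseChange ℂ (V.d 0 (-1)).hom) v, (dD 0 (-1) α, 0)) := rfl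
      rw [hd]
      simp only [LinearMap.prod_apply, LinearMap.comp_apply, LinearMap.fst_apply,
        LinearMap.snd_apply, Pi.prod, LinearMap.smul_apply, Prod.mk_add_mk]
      have he : evy (-1) (dD 0 (-1) α) = α ⟨Or.inl rfl⟩ := by
        rw [evy_neg1]
        show (dD 0 (-1) α) ⟨Or.inr rfl⟩ = α ⟨Or.inl rfl⟩
        rw [dD_0]
        rfl
      refine Prod.ext ?_ (Prod.ext ?_ ?_)
      · show v = 0 + 0 + v
        simp
      · show (0 : DX 0) = (-1 : ℂ) • constD 0 (evy (-1) (dD 0 (-1) α)) + 0 + α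
        funext p
        simp only [Pi.add_apply, Pi.smul_apply, Pi.zero_apply, he]
        show (0 : ℂ) = (-1 : ℂ) * α ⟨Or.inl rfl⟩ + 0 + α p
        rw [plift_eq p ⟨Or.inl rfl⟩]
        ring
      · show qs s 0 (α, c) = (s : ℂ) • constC 0 (evy (-1) (dD 0 (-1) α)) + 0 + c
        funext p
        simp only [Pi.add_apply, Pi.smul_apply, Pi.zero_apply, he, qs]
        show (s : ℂ) * α ⟨Or.inl p.down⟩ + c p = (s : ℂ) * α ⟨Or.inl rfl⟩ + 0 + c p
        rw [plift_eq (⟨Or.inl p.down⟩ : PLift ((0 : ℤ) = 0 ∨ (0 : ℤ) = -1)) ⟨Or.inl rfl⟩]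
        ring
    · by_cases hi1 : i = -1
      · subst hi1
        rw [dNext_eq _ (show (ComplexShape.down ℤ).Rel (-1) (-2) by simp),
          prevD_eq _ (show (ComplexShape.down ℤ).Rel 0 (-1) by simp)]
        rw [hmap_ne V s (-2) (-1) (by norm_num), Limits.comp_zero, hmap_zero V s (-1)]
        apply ModuleCat.hom_ext
        apply LinearMap.ext
        rintro ⟨v, α, c⟩
        show ((v, ((0 : DX (-1)), qs s (-1) (α, c)))
              : (ℂ ⊗[ℝ] V.X (-1)) × (DX (-1) × CXc (-1)))
            = (0 : (ℂ ⊗[ℝ] V.X (-1)) × (DX (-1) × CXc (-1)))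
              + ((0 : ℂ ⊗[ℝ] V.X (-1)),
                (dD 0 (-1) ((-1 : ℂ) • constD 0 (evy (-1) α)), (0 : CXc (-1))))
              + (v, (α, c))
        have he : evy (-1) α = α ⟨Or.inr rfl⟩ := by rw [evy_neg1]; rfl
        refine Prod.ext ?_ (Prod.ext ?_ ?_)
        · show v = 0 + 0 + v
          simp
        · show (0 : DX (-1)) = 0 + dD 0 (-1) ((-1 : ℂ) • constD 0 (evy (-1) α)) + α
          funext p
          rw [dD_0, he]
          show (0 : ℂ) = 0 + (-1 : ℂ) * α ⟨Or.inr rfl⟩ + α p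
          rw [plift_eq p ⟨Or.inr rfl⟩]
          ring
        · show qs s (-1) (α, c) = 0 + 0 + c
          funext p
          exact absurd p.down (by norm_num)
      · rw [dNext_eq _ (show (ComplexShape.down ℤ).Rel i (i - 1) by simp),
          prevD_eq _ (show (ComplexShape.down ℤ).Rel (i + 1) i by simp)]
        rw [hmap_ne V s (i - 1) i hi0, hmap_ne V s i (i + 1) (by omega),
          Limits.comp_zero, Limits.zero_comp]
        apply ModuleCat.hom_ext
        apply LinearMap.ext
        rintro ⟨v, α, c⟩
        show ((v, ((0 : DX i), qs s i (α, c))) : (ℂ ⊗[ℝ] V.X i) × (DX i × CXc i))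
            = 0 + 0 + (v, (α, c))
        refine Prod.ext ?_ (Prod.ext ?_ ?_)
        · show v = 0 + 0 + v
          simp
        · funext p
          exact absurd p.down (by omega)
        · funext p
          exact absurd p.down (by omega)

/-- `π_s` is a homotopy equivalence `H ≃ Heis(V, τ + s ∂ρ)`. -/
def hequiv (V : ChainComplex (ModuleCat ℝ) ℤ) (s : ℝ) :
    HomotopyEquiv (Hcx V) (Heiscx V) where
  hom := πs V s
  inv := ιs V
  homotopyHomInvId := homoPiIota V s
  homotopyInvHomId := Homotopy.ofEq (by
    ext n : 1
    apply ModuleCat.hom_ext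
    apply LinearMap.ext
    rintro ⟨v, c⟩
    show (LinearMap.prodMap LinearMap.id (qs s n))
        ((LinearMap.prodMap LinearMap.id (LinearMap.prod 0 LinearMap.id)) (v, c)) = (v, c)
    refine Prod.ext rfl ?_
    show qs s n (0, c) = c
    have h0 : (LinearMap.fst ℂ (DX n) (CXc n)) (0, c) = 0 := rfl
    simp [qs, h0]
    exact Or.inr rfl)

/-- Let `(V, τ)` be an unshifted Poisson complex over `ℝ` and `ρ` a
degree `1` element of `hom(Λ²V, ℝ)`.  Let `D` be the acyclic two-term complex
`ℂ ←^{id} ℂ` in degrees `0, -1` (with generators `x`, `y = dx`) and let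
`H = V_ℂ ⊕ D ⊕ ℂ` be the dg Lie algebra with bracket
`[v₁⊕α₁⊕c₁, v₂⊕α₂⊕c₂] = 0 ⊕ (i ∂ρ(v₁,v₂) x + i ρ(v₁,v₂) y) ⊕ i τ(v₁,v₂)`.  For every real
`s`, the quotient of `H` by the dg Lie ideal generated by `x = s · 1`, `y = 0` is the
Heisenberg dg Lie algebra `Heis(V, τ + s ∂ρ)` with underlying complex `V_ℂ ⊕ ℂ`, and the
quotient chain map `π_s = id ⊕ q_s`, where `q_s((c₁x + c₂y) ⊕ c₃) = s c₁ + c₃`, is a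
quasi-isomorphism. -/
theorem stmt14 (V : ChainComplex (ModuleCat ℝ) ℤ) (τ : Pairing V 0) (ρ : Pairing V 1)
    (hcycle : dPair V 0 (-1) (by omega) τ = 0) (hanti : IsAntisym V 0 τ) (s : ℝ) :
    QuasiIso (πs V s) := by
  exact inferInstanceAs (QuasiIso (hequiv V s).hom)

end
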